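/- With G(ε) = ∫₀^∞ ξ² (max(α − ε√(1+ξ²), 0))^{σ+1} dξ for σ ∈ (0,3/2) and α > 0, G is differentiable on (0, α] with G'(ε) = −(σ+1) ∫₀^∞ ξ² √(1+ξ²) (max(α − ε√(1+ξ²), 0))^σ dξ, and there exist α-independent constants c₂ > c₁ > 0 with c₁ α^{−3/2}(α−ε)^{3/2+σ} ≤ −G'(ε) ≤ c₂ α^{−3/2}(α−ε)^{3/2+σ} for ε ∈ [α/√2, α]. -/

import Mathlib

open MeasureTheory Real Set Filter
set_option maxHeartbeats 1000000

lemma maxpow_hasDerivAt {p : ℝ} (hp : 0 < p) (y : ℝ) :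
    HasDerivAt (fun y : ℝ => (max y 0) ^ (p + 1)) ((p + 1) * (max y 0) ^ p) y := by
  rcases lt_trichotomy y 0 with h | h | h
  · have hd : HasDerivAt (fun _ : ℝ => (0:ℝ) ^ (p+1)) 0 y := hasDerivAt_const _ _
    have hev : (fun y : ℝ => (max y 0) ^ (p+1)) =ᶠ[nhds y] fun _ => (0:ℝ) ^ (p+1) := by
      filter_upwards [eventually_lt_nhds h] with z hz
      rw [max_eq_right hz.le]
    have := hd.congr_of_eventuallyEq hev
    rw [max_eq_right h.le, Real.zero_rpow hp.ne', mul_zero]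
    exact this
  · subst h
    rw [hasDerivAt_iff_isLittleO]
    have h0 : (max (0:ℝ) 0) = 0 := max_self 0
    simp only [h0, Real.zero_rpow (by positivity : p + 1 ≠ 0), Real.zero_rpow hp.ne',
      sub_zero, smul_eq_mul, mul_zero]
    rw [Asymptotics.isLittleO_iff]
    intro c hc
    have hr : (0:ℝ) < c ^ (1/p) := Real.rpow_pos_of_pos hc _
    filter_upwards [Metric.ball_mem_nhds (0:ℝ) hr] with z hz
    have hz' : |z| < c ^ (1/p) := by simpa [Real.dist_eq] using hz
    have hm0 : (0:ℝ) ≤ max z 0 := le_max_right _ _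
    have hm : max z 0 ≤ |z| := max_le (le_abs_self z) (abs_nonneg z)
    have h1 : (max z 0) ^ p ≤ c := by
      calc (max z 0) ^ p ≤ (c ^ (1/p)) ^ p :=
            Real.rpow_le_rpow hm0 (hm.trans hz'.le) hp.le
        _ = c := by rw [← Real.rpow_mul hc.le, one_div_mul_cancel hp.ne', Real.rpow_one]
    have h2 : (max z 0) ^ (p + 1) = (max z 0) ^ p * (max z 0) := by
      rw [Real.rpow_add' hm0 (by positivity), Real.rpow_one]
    rw [Real.norm_eq_abs, h2, abs_of_nonneg (by positivity)]
    calc (max z 0) ^ p * max z 0 ≤ c * |z| := by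
          apply mul_le_mul h1 hm hm0 hc.le
      _ = c * ‖z‖ := by rw [Real.norm_eq_abs]
  · have hd : HasDerivAt (fun z : ℝ => z ^ (p+1)) ((p+1) * y ^ (p+1-1)) y :=
      Real.hasDerivAt_rpow_const (Or.inl h.ne')
    have hev : (fun y : ℝ => (max y 0) ^ (p+1)) =ᶠ[nhds y] fun z => z ^ (p+1) := by
      filter_upwards [eventually_gt_nhds h] with z hz
      rw [max_eq_left hz.le]
    have := hd.congr_of_eventuallyEq hev
    rw [show p + 1 - 1 = p from by ring] at this
    simpa [max_eq_left h.le] using this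

lemma cont_aux {q : ℝ} (hq : 0 < q) (α c : ℝ) :
    Continuous (fun ξ : ℝ => (max (α - c * Real.sqrt (1 + ξ ^ 2)) 0) ^ q) := by
  apply (Real.continuous_rpow_const hq.le).comp
  exact ((continuous_const.sub (continuous_const.mul
    (Real.continuous_sqrt.comp (by continuity)))).max continuous_const)

lemma integrable_gen (g : ℝ → ℝ) (hg : Continuous g) {α c q : ℝ} (hc : 0 < c) (hq : 0 < q) :
    Integrable (fun ξ : ℝ => g ξ * (max (α - c * Real.sqrt (1 + ξ ^ 2)) 0) ^ q) := by
  apply Continuous.integrable_of_hasCompactSupport (hg.mul (cont_aux hq α c))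
  apply HasCompactSupport.intro (isCompact_Icc (a := -(|α|/c)) (b := |α|/c))
  intro x hx
  have hxa : |α| / c < |x| := by
    rcases abs_lt.mp.mt (fun h => hx ⟨by linarith [h.1], h.2.le⟩) with h
    · rcases lt_or_ge (|α|/c) |x| with h' | h'
      · exact h'
      · exact absurd (abs_le.mp h') (fun h2 => hx ⟨h2.1, h2.2⟩)
  have hs : |x| ≤ Real.sqrt (1 + x ^ 2) := by
    rw [show |x| = Real.sqrt (x ^ 2) from (Real.sqrt_sq_eq_abs x).symm]
    exact Real.sqrt_le_sqrt (by nlinarith)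
  have : α - c * Real.sqrt (1 + x ^ 2) ≤ 0 := by
    have h1 : |α| < c * |x| := (div_lt_iff₀' hc).mp hxa
    have h2 : c * |x| ≤ c * Real.sqrt (1 + x ^ 2) := by nlinarith
    have := le_abs_self α
    linarith
  simp only [Pi.mul_apply]
  rw [max_eq_right this, Real.zero_rpow hq.ne', mul_zero]

lemma inner_hasDerivAt {σ : ℝ} (hσ : 0 < σ) (α s ε : ℝ) :
    HasDerivAt (fun ε : ℝ => (max (α - ε * s) 0) ^ (σ + 1))
      ((σ + 1) * (max (α - ε * s) 0) ^ σ * (-s)) ε := by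
  have h1 : HasDerivAt (fun ε : ℝ => α - ε * s) (-s) ε := by
    simpa using ((hasDerivAt_id ε).mul_const s).const_sub α
  exact (maxpow_hasDerivAt hσ (α - ε * s)).comp ε h1

/-- `G(ε) = ∫₀^∞ ξ² (max(α − ε√(1+ξ²), 0))^{σ+1} dξ`. -/
noncomputable def Gfun (σ α ε : ℝ) : ℝ :=
  ∫ ξ in Set.Ioi (0:ℝ), ξ ^ 2 * (max (α - ε * Real.sqrt (1 + ξ ^ 2)) 0) ^ (σ + 1)

/-- `G'(ε) = −(σ+1) ∫₀^∞ ξ² √(1+ξ²) (max(α − ε√(1+ξ²), 0))^σ dξ`. -/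
noncomputable def GderivFun (σ α ε : ℝ) : ℝ :=
  -(σ + 1) * ∫ ξ in Set.Ioi (0:ℝ),
    ξ ^ 2 * Real.sqrt (1 + ξ ^ 2) * (max (α - ε * Real.sqrt (1 + ξ ^ 2)) 0) ^ σ

lemma part1 {σ : ℝ} (hσ : 0 < σ) (α : ℝ) (ε₀ : ℝ) (hε₀ : ε₀ ∈ Set.Ioc (0:ℝ) α) :
    HasDerivAt (Gfun σ α) (GderivFun σ α ε₀) ε₀ := by
  obtain ⟨h0, _⟩ := hε₀
  set μ := volume.restrict (Set.Ioi (0:ℝ)) with hμ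
  have hcontF : ∀ x : ℝ, Continuous
      (fun ξ : ℝ => ξ ^ 2 * (max (α - x * Real.sqrt (1+ξ^2)) 0) ^ (σ+1)) :=
    fun x => (continuous_pow 2).mul (cont_aux (by positivity) α x)
  have hcontF' : Continuous (fun ξ : ℝ =>
      ξ ^ 2 * ((σ+1) * (max (α - ε₀ * Real.sqrt (1+ξ^2)) 0) ^ σ * (-(Real.sqrt (1+ξ^2))))) := by
    apply (continuous_pow 2).mul
    exact (continuous_const.mul (cont_aux hσ α ε₀)).mul
      ((Real.continuous_sqrt.comp (by continuity)).neg)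
  have key := hasDerivAt_integral_of_dominated_loc_of_deriv_le (μ := μ) (x₀ := ε₀)
    (F := fun x ξ => ξ ^ 2 * (max (α - x * Real.sqrt (1+ξ^2)) 0) ^ (σ+1))
    (F' := fun x ξ => ξ ^ 2 * ((σ+1) * (max (α - x * Real.sqrt (1+ξ^2)) 0) ^ σ
      * (-(Real.sqrt (1+ξ^2)))))
    (bound := fun ξ => ((σ+1) * (ξ^2 * Real.sqrt (1+ξ^2)))
      * (max (α - (ε₀/2) * Real.sqrt (1+ξ^2)) 0) ^ σ)
    (Metric.ball_mem_nhds ε₀ (half_pos h0))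
    (Eventually.of_forall fun x => (hcontF x).aestronglyMeasurable)
    ((integrable_gen (fun ξ => ξ^2) (continuous_pow 2) h0 (by positivity)).integrableOn)
    hcontF'.aestronglyMeasurable
    (Eventually.of_forall fun ξ => ?_)
    ((integrable_gen (fun ξ => (σ+1) * (ξ^2 * Real.sqrt (1+ξ^2)))
      (by continuity) (half_pos h0) hσ).integrableOn)
    (Eventually.of_forall fun ξ x _ => (inner_hasDerivAt hσ α _ x).const_mul (ξ^2))
  · have h2 := key.2
    have heq : (∫ ξ, ξ ^ 2 * ((σ+1) * (max (α - ε₀ * Real.sqrt (1+ξ^2)) 0) ^ σ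
        * (-(Real.sqrt (1+ξ^2)))) ∂μ) = GderivFun σ α ε₀ := by
      unfold GderivFun
      rw [← integral_const_mul]
      congr 1
      funext ξ
      ring
    rw [heq] at h2
    exact h2
  · intro x hx
    have hx2 : ε₀/2 ≤ x := by
      have := (abs_lt.mp (by simpa [Real.dist_eq] using hx)).1; linarith
    set s := Real.sqrt (1+ξ^2) with hs
    have hs0 : 0 ≤ s := Real.sqrt_nonneg _
    have hm0 : (0:ℝ) ≤ max (α - x*s) 0 := le_max_right _ _
    have hmono : max (α - x*s) 0 ≤ max (α - (ε₀/2)*s) 0 :=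
      max_le_max (by nlinarith) le_rfl
    have hr : (max (α - x*s) 0) ^ σ ≤ (max (α - (ε₀/2)*s) 0) ^ σ :=
      Real.rpow_le_rpow hm0 hmono hσ.le
    rw [Real.norm_eq_abs]
    have habs : |ξ^2 * ((σ+1) * (max (α - x*s) 0) ^ σ * (-s))|
        = ξ^2 * ((σ+1) * (max (α - x*s) 0) ^ σ * s) := by
      rw [abs_mul, abs_of_nonneg (sq_nonneg ξ), abs_mul, abs_mul, abs_neg,
        abs_of_nonneg (by positivity : (0:ℝ) ≤ σ+1),
        abs_of_nonneg (Real.rpow_nonneg hm0 σ), abs_of_nonneg hs0]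
    rw [habs]
    calc ξ^2 * ((σ+1) * (max (α - x*s) 0) ^ σ * s)
        = ((σ+1) * (ξ^2 * s)) * (max (α - x*s) 0) ^ σ := by ring
      _ ≤ ((σ+1) * (ξ^2 * s)) * (max (α - (ε₀/2)*s) 0) ^ σ :=
          mul_le_mul_of_nonneg_left hr (by positivity)

lemma part2core {σ : ℝ} (hσ : 0 < σ) {α : ℝ} (hα : 0 < α) {ε : ℝ}
    (hε1 : α / Real.sqrt 2 ≤ ε) (hε2 : ε ≤ α) :
    (σ+1) * (2:ℝ)^(-σ) / 3 * α ^ (-(3/2) : ℝ) * (α - ε) ^ (3/2 + σ) ≤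
      (σ+1) * ∫ ξ in Set.Ioi (0:ℝ),
        ξ ^ 2 * Real.sqrt (1 + ξ ^ 2) * (max (α - ε * Real.sqrt (1 + ξ ^ 2)) 0) ^ σ ∧
    (σ+1) * (∫ ξ in Set.Ioi (0:ℝ),
        ξ ^ 2 * Real.sqrt (1 + ξ ^ 2) * (max (α - ε * Real.sqrt (1 + ξ ^ 2)) 0) ^ σ) ≤
      (σ+1) * (2 * Real.sqrt 3 * (2:ℝ)^((3:ℝ)/4)) * α ^ (-(3/2) : ℝ) * (α - ε) ^ (3/2 + σ) := by
  have hs2 : (1:ℝ) < Real.sqrt 2 := by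
    nlinarith [Real.sq_sqrt (by norm_num : (0:ℝ) ≤ 2), Real.sqrt_nonneg 2]
  have hε0 : 0 < ε := lt_of_lt_of_le (by positivity) hε1
  set F : ℝ → ℝ := fun ξ =>
    ξ ^ 2 * Real.sqrt (1 + ξ ^ 2) * (max (α - ε * Real.sqrt (1 + ξ ^ 2)) 0) ^ σ with hF
  have hFc : Continuous F := by
    rw [hF]
    exact ((continuous_pow 2).mul (Real.continuous_sqrt.comp (by continuity))).mul
      (cont_aux hσ α ε)
  have hfi : IntegrableOn F (Set.Ioi 0) := by
    rw [hF]
    exact (integrable_gen (fun ξ => ξ^2 * Real.sqrt (1+ξ^2))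
      ((continuous_pow 2).mul (Real.continuous_sqrt.comp (by continuity))) hε0 hσ).integrableOn
  have hf0 : ∀ ξ, 0 ≤ F ξ := fun ξ =>
    mul_nonneg (mul_nonneg (sq_nonneg _) (Real.sqrt_nonneg _))
      (Real.rpow_nonneg (le_max_right _ _) _)
  rcases eq_or_lt_of_le hε2 with heq | hlt
  · subst heq
    have hz : (∫ ξ in Set.Ioi (0:ℝ), F ξ) = 0 := by
      apply setIntegral_eq_zero_of_forall_eq_zero
      intro ξ hξ
      have hξ0 : 0 < ξ := hξ
      have h1 : (1:ℝ) < Real.sqrt (1 + ξ^2) :=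
        (Real.lt_sqrt (by norm_num)).mpr (by nlinarith)
      have hle : ε - ε * Real.sqrt (1+ξ^2) ≤ 0 := by nlinarith
      simp only [hF, max_eq_right hle, Real.zero_rpow hσ.ne', mul_zero]
    rw [hz]
    have hz2 : ((ε - ε : ℝ)) ^ (3/2 + σ) = 0 := by
      rw [sub_self, Real.zero_rpow (by positivity)]
    rw [hz2]
    norm_num
  · -- ε < α
    set T := (α - ε)/ε with hT
    have hαε : 0 < α - ε := by linarith
    have hT0 : 0 < T := div_pos hαε hε0
    have hεT : ε * T = α - ε := by rw [hT, mul_div_assoc', mul_div_cancel_left₀ _ hε0.ne']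
    have hαs : α ≤ ε * Real.sqrt 2 := by
      rw [div_le_iff₀ (by positivity)] at hε1; linarith
    have hsqrt32 : Real.sqrt 2 ≤ 3/2 := by
      nlinarith [Real.sq_sqrt (by norm_num : (0:ℝ) ≤ 2), Real.sqrt_nonneg 2]
    have hThalf : T ≤ 1/2 := by
      rw [hT, div_le_iff₀ hε0]; nlinarith
    -- algebraic rewrites
    have e1 : (Real.sqrt T)^3 = T ^ (3/2 : ℝ) := by
      rw [← Real.rpow_natCast (Real.sqrt T) 3, Real.sqrt_eq_rpow, ← Real.rpow_mul hT0.le]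
      norm_num
    have e2 : T ^ (3/2 : ℝ) = (α-ε) ^ (3/2 : ℝ) * ε ^ (-(3/2 : ℝ)) := by
      rw [hT, Real.div_rpow hαε.le hε0.le, Real.rpow_neg hε0.le, div_eq_mul_inv]
    have e4 : (α-ε) ^ σ * (α-ε) ^ (3/2 : ℝ) = (α-ε) ^ ((3:ℝ)/2 + σ) := by
      rw [← Real.rpow_add hαε, add_comm]
    have e5 : α ^ (-(3/2 : ℝ)) ≤ ε ^ (-(3/2 : ℝ)) :=
      Real.rpow_le_rpow_of_nonpos hε0 hε2 (by norm_num)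
    have e6 : (2:ℝ)^(-σ) = ((2:ℝ)^σ)⁻¹ := Real.rpow_neg (by norm_num) σ
    have hX0 : (0:ℝ) ≤ (α-ε) ^ ((3:ℝ)/2 + σ) := Real.rpow_nonneg hαε.le _
    constructor
    · -- lower bound
      have hlow : ((α-ε)/2) ^ σ * ((Real.sqrt T)^3 / 3) ≤ ∫ ξ in Set.Ioi (0:ℝ), F ξ := by
        have hsub : Set.Ioc (0:ℝ) (Real.sqrt T) ⊆ Set.Ioi 0 := Set.Ioc_subset_Ioi_self
        have step2 : (∫ ξ in Set.Ioc (0:ℝ) (Real.sqrt T), F ξ) ≤ ∫ ξ in Set.Ioi (0:ℝ), F ξ :=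
          setIntegral_mono_set hfi (Eventually.of_forall hf0)
            (HasSubset.Subset.eventuallyLE hsub)
        have step1 : (∫ ξ in Set.Ioc (0:ℝ) (Real.sqrt T), ((α-ε)/2) ^ σ * ξ^2) ≤
            ∫ ξ in Set.Ioc (0:ℝ) (Real.sqrt T), F ξ := by
          apply setIntegral_mono_on
          · exact Continuous.integrableOn_Ioc (continuous_const.mul (continuous_pow 2))
          · exact hfi.mono_set hsub
          · exact measurableSet_Ioc
          · intro ξ hξ
            obtain ⟨hξ0, hξT⟩ := hξ
            have hξ2 : ξ^2 ≤ T := by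
              nlinarith [Real.sq_sqrt hT0.le, Real.sqrt_nonneg T]
            have hsle : Real.sqrt (1+ξ^2) ≤ 1 + T/2 := by
              have h := Real.sqrt_le_sqrt (show 1+ξ^2 ≤ (1+T/2)^2 by nlinarith)
              rwa [Real.sqrt_sq (by positivity)] at h
            have hsge : (1:ℝ) ≤ Real.sqrt (1+ξ^2) :=
              (Real.le_sqrt' one_pos).mpr (by nlinarith)
            have hmge : ((α-ε)/2) ≤ max (α - ε * Real.sqrt (1+ξ^2)) 0 := by
              apply le_max_of_le_left
              nlinarith
            have hrge : ((α-ε)/2) ^ σ ≤ (max (α - ε * Real.sqrt (1+ξ^2)) 0) ^ σ :=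
              Real.rpow_le_rpow (by positivity) hmge hσ.le
            simp only [hF]
            calc ((α-ε)/2) ^ σ * ξ^2 = ξ^2 * 1 * ((α-ε)/2) ^ σ := by ring
              _ ≤ ξ^2 * Real.sqrt (1+ξ^2) * (max (α - ε * Real.sqrt (1+ξ^2)) 0) ^ σ := by
                  apply mul_le_mul (mul_le_mul_of_nonneg_left hsge (sq_nonneg ξ)) hrge
                    (by positivity) (by positivity)
        have hcomp : (∫ ξ in Set.Ioc (0:ℝ) (Real.sqrt T), ((α-ε)/2) ^ σ * ξ^2)
            = ((α-ε)/2) ^ σ * ((Real.sqrt T)^3/3) := by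
          rw [← intervalIntegral.integral_of_le (Real.sqrt_nonneg T),
            intervalIntegral.integral_const_mul, integral_pow]
          norm_num
        rw [← hcomp]
        exact le_trans step1 step2
      have e3 : ((α-ε)/2) ^ σ = (α-ε) ^ σ * ((2:ℝ)^σ)⁻¹ := by
        rw [Real.div_rpow hαε.le (by norm_num), div_eq_mul_inv]
      have key1 : ((α-ε)/2) ^ σ * ((Real.sqrt T)^3/3)
          = ((2:ℝ)^σ)⁻¹/3 * (α-ε) ^ ((3:ℝ)/2 + σ) * ε ^ (-(3/2 : ℝ)) := by
        rw [e3, e1, e2, ← e4]; ring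
      have hA : (0:ℝ) ≤ (σ+1) * (((2:ℝ)^σ)⁻¹/3 * (α-ε) ^ ((3:ℝ)/2 + σ)) := by positivity
      calc (σ+1) * (2:ℝ)^(-σ) / 3 * α ^ (-(3/2) : ℝ) * (α - ε) ^ (3/2 + σ)
          = (σ+1) * (((2:ℝ)^σ)⁻¹/3 * (α-ε) ^ ((3:ℝ)/2 + σ)) * α ^ (-(3/2 : ℝ)) := by
            rw [e6]; norm_num; ring
        _ ≤ (σ+1) * (((2:ℝ)^σ)⁻¹/3 * (α-ε) ^ ((3:ℝ)/2 + σ)) * ε ^ (-(3/2 : ℝ)) :=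
            mul_le_mul_of_nonneg_left e5 hA
        _ = (σ+1) * (((α-ε)/2) ^ σ * ((Real.sqrt T)^3/3)) := by rw [key1]; ring
        _ ≤ (σ+1) * ∫ ξ in Set.Ioi (0:ℝ), F ξ :=
            mul_le_mul_of_nonneg_left hlow (by positivity)
    · -- upper bound
      set b := Real.sqrt (3*T) with hb
      have hb0 : 0 ≤ b := Real.sqrt_nonneg _
      have hsplit : (∫ ξ in Set.Ioi (0:ℝ), F ξ) =
          (∫ ξ in Set.Ioc (0:ℝ) b, F ξ) + ∫ ξ in Set.Ioi b, F ξ := by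
        rw [← setIntegral_union (Set.Ioc_disjoint_Ioi le_rfl) measurableSet_Ioi
          (hfi.mono_set Set.Ioc_subset_Ioi_self) (hfi.mono_set (Set.Ioi_subset_Ioi hb0)),
          Set.Ioc_union_Ioi_eq_Ioi hb0]
      have htail : (∫ ξ in Set.Ioi b, F ξ) = 0 := by
        apply setIntegral_eq_zero_of_forall_eq_zero
        intro ξ hξ
        have hξb : b < ξ := hξ
        have hξ2 : 3*T < ξ^2 := (Real.sqrt_lt' (hb0.trans_lt hξb)).mp hξb
        have hmax : α - ε * Real.sqrt (1+ξ^2) ≤ 0 := by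
          have h := Real.sqrt_le_sqrt (show (1+T)^2 ≤ 1+ξ^2 by nlinarith)
          rw [Real.sqrt_sq (by positivity)] at h
          have h2 : ε * (1+T) ≤ ε * Real.sqrt (1+ξ^2) := mul_le_mul_of_nonneg_left h hε0.le
          nlinarith
        simp only [hF, max_eq_right hmax, Real.zero_rpow hσ.ne', mul_zero]
      have hbody : (∫ ξ in Set.Ioc (0:ℝ) b, F ξ) ≤
          ∫ ξ in Set.Ioc (0:ℝ) b, 2*(α-ε) ^ σ * ξ^2 := by
        apply setIntegral_mono_on (hfi.mono_set Set.Ioc_subset_Ioi_self)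
          (Continuous.integrableOn_Ioc (continuous_const.mul (continuous_pow 2)))
          measurableSet_Ioc
        intro ξ hξ
        obtain ⟨hξ0, hξb⟩ := hξ
        have hξ2 : ξ^2 ≤ 3*T := by
          nlinarith [Real.sq_sqrt (by positivity : (0:ℝ) ≤ 3*T), Real.sqrt_nonneg (3*T)]
        have hsle2 : Real.sqrt (1+ξ^2) ≤ 2 := by
          have h := Real.sqrt_le_sqrt (show 1+ξ^2 ≤ 2^2 by nlinarith)
          rwa [Real.sqrt_sq (by norm_num)] at h
        have hsge : (1:ℝ) ≤ Real.sqrt (1+ξ^2) := (Real.le_sqrt' one_pos).mpr (by nlinarith)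
        have hmle : max (α - ε * Real.sqrt (1+ξ^2)) 0 ≤ α - ε := by
          apply max_le _ hαε.le
          nlinarith
        have hrle : (max (α - ε * Real.sqrt (1+ξ^2)) 0) ^ σ ≤ (α-ε) ^ σ :=
          Real.rpow_le_rpow (le_max_right _ _) hmle hσ.le
        simp only [hF]
        calc ξ^2 * Real.sqrt (1+ξ^2) * (max (α - ε*Real.sqrt (1+ξ^2)) 0) ^ σ
            ≤ ξ^2 * 2 * (α-ε) ^ σ := by
              apply mul_le_mul (mul_le_mul_of_nonneg_left hsle2 (sq_nonneg ξ)) hrle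
                (Real.rpow_nonneg (le_max_right _ _) _) (by positivity)
          _ = 2*(α-ε) ^ σ * ξ^2 := by ring
      have hcomp2 : (∫ ξ in Set.Ioc (0:ℝ) b, 2*(α-ε) ^ σ * ξ^2)
          = 2*(α-ε) ^ σ * (b^3/3) := by
        rw [← intervalIntegral.integral_of_le hb0, intervalIntegral.integral_const_mul,
          integral_pow]
        norm_num
      have hIle : (∫ ξ in Set.Ioi (0:ℝ), F ξ) ≤ 2*(α-ε) ^ σ * (b^3/3) := by
        rw [hsplit, htail, add_zero, ← hcomp2]
        exact hbody
      have eb1 : b^3 = (3*T) ^ (3/2 : ℝ) := by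
        rw [hb, ← Real.rpow_natCast (Real.sqrt (3*T)) 3, Real.sqrt_eq_rpow,
          ← Real.rpow_mul (by positivity)]
        norm_num
      have eb2 : (3*T) ^ (3/2 : ℝ) = (3:ℝ) ^ (3/2 : ℝ) * T ^ (3/2 : ℝ) :=
        Real.mul_rpow (by norm_num) hT0.le
      have eb3 : (3:ℝ) ^ (3/2 : ℝ) = 3 * Real.sqrt 3 := by
        rw [show (3/2 : ℝ) = 1 + 1/2 by norm_num, Real.rpow_add (by norm_num),
          Real.rpow_one, ← Real.sqrt_eq_rpow]
      have keyU : 2*(α-ε) ^ σ * (b^3/3)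
          = 2*Real.sqrt 3*((α-ε) ^ ((3/2 : ℝ)+σ) * ε ^ (-(3/2) : ℝ)) := by
        rw [eb1, eb2, eb3, e2, ← e4]; ring
      have eup : ε ^ (-(3/2) : ℝ) ≤ α ^ (-(3/2) : ℝ) * (2:ℝ) ^ ((3:ℝ)/4) := by
        have h := Real.rpow_le_rpow_of_nonpos (show (0:ℝ) < α/Real.sqrt 2 by positivity)
          hε1 (show (-(3/2) : ℝ) ≤ 0 by norm_num)
        have hq : (Real.sqrt 2) ^ (-(3/2) : ℝ) = (2:ℝ) ^ (-((3:ℝ)/4)) := by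
          rw [Real.sqrt_eq_rpow, ← Real.rpow_mul (by norm_num : (0:ℝ) ≤ 2)]
          norm_num
        have hdiv : (α/Real.sqrt 2) ^ (-(3/2) : ℝ) = α ^ (-(3/2) : ℝ) * (2:ℝ) ^ ((3:ℝ)/4) := by
          rw [Real.div_rpow hα.le (Real.sqrt_nonneg 2), hq,
            Real.rpow_neg (by norm_num : (0:ℝ) ≤ 2), div_eq_mul_inv, inv_inv]
        rw [hdiv] at h
        convert h using 2
      have hB : (0:ℝ) ≤ (σ+1) * (2*Real.sqrt 3) * (α-ε) ^ ((3/2 : ℝ)+σ) := by positivity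
      calc (σ+1) * (∫ ξ in Set.Ioi (0:ℝ), F ξ)
          ≤ (σ+1) * (2*(α-ε) ^ σ * (b^3/3)) :=
            mul_le_mul_of_nonneg_left hIle (by positivity)
        _ = (σ+1) * (2*Real.sqrt 3) * (α-ε) ^ ((3/2 : ℝ)+σ) * ε ^ (-(3/2) : ℝ) := by
            rw [keyU]; ring
        _ ≤ (σ+1) * (2*Real.sqrt 3) * (α-ε) ^ ((3/2 : ℝ)+σ)
            * (α ^ (-(3/2) : ℝ) * (2:ℝ) ^ ((3:ℝ)/4)) :=
            mul_le_mul_of_nonneg_left eup hB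
        _ = (σ+1) * (2 * Real.sqrt 3 * (2:ℝ)^((3:ℝ)/4)) * α ^ (-(3/2) : ℝ)
            * (α - ε) ^ (3/2 + σ) := by ring

theorem stmt_11 (σ : ℝ) (hσ : σ ∈ Set.Ioo (0:ℝ) (3/2)) :
    (∀ α : ℝ, 0 < α → ∀ ε ∈ Set.Ioc (0:ℝ) α,
      HasDerivAt (Gfun σ α) (GderivFun σ α ε) ε) ∧
    (∃ c₁ c₂ : ℝ, 0 < c₁ ∧ c₁ < c₂ ∧ ∀ α : ℝ, 0 < α →
      ∀ ε ∈ Set.Icc (α / Real.sqrt 2) α,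
        c₁ * α ^ (-(3/2) : ℝ) * (α - ε) ^ (3/2 + σ) ≤ -(GderivFun σ α ε) ∧
        -(GderivFun σ α ε) ≤ c₂ * α ^ (-(3/2) : ℝ) * (α - ε) ^ (3/2 + σ)) := by
  obtain ⟨hσ0, hσ2⟩ := hσ
  constructor
  · intro α hα ε hε
    exact part1 hσ0 α ε hε
  · refine ⟨(σ+1) * (2:ℝ)^(-σ) / 3, (σ+1) * (2 * Real.sqrt 3 * (2:ℝ)^((3:ℝ)/4)),
      by positivity, ?_, ?_⟩
    · have h1 : (2:ℝ)^(-σ) < 1 :=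
        Real.rpow_lt_one_of_one_lt_of_neg (by norm_num) (by linarith)
      have h2 : (1:ℝ) ≤ Real.sqrt 3 := by
        nlinarith [Real.sq_sqrt (by norm_num : (0:ℝ) ≤ 3), Real.sqrt_nonneg 3]
      have h3 : (1:ℝ) ≤ (2:ℝ)^((3:ℝ)/4) := Real.one_le_rpow (by norm_num) (by norm_num)
      have hp : (0:ℝ) < σ + 1 := by linarith
      have h23 : (1:ℝ) ≤ Real.sqrt 3 * (2:ℝ)^((3:ℝ)/4) := by nlinarith
      nlinarith [Real.rpow_pos_of_pos (show (0:ℝ) < 2 by norm_num) (-σ)]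
    · intro α hα ε hε
      obtain ⟨hε1, hε2⟩ := hε
      have h := part2core hσ0 hα hε1 hε2
      have hneg : -(GderivFun σ α ε) = (σ+1) * ∫ ξ in Set.Ioi (0:ℝ),
          ξ ^ 2 * Real.sqrt (1 + ξ ^ 2) * (max (α - ε * Real.sqrt (1 + ξ ^ 2)) 0) ^ σ := by
        unfold GderivFun; ring
      rw [hneg]
      exact h
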